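/- For η ∈ (0,1), the Gaussian reverse coherent information of a TMSV of mean photon number μ through a pure loss channel of transmissivity η, given by I_R(μ) = g(2μ+1) − g(2(1−η)μ+1) with g(x) = ((x+1)/2)log₂((x+1)/2) − ((x−1)/2)log₂((x−1)/2), converges to −log₂(1−η) as μ → ∞. -/

import Mathlib

noncomputable def thermalEntropy (x : ℝ) : ℝ :=
  ((x + 1) / 2) * Real.logb 2 ((x + 1) / 2) - ((x - 1) / 2) * Real.logb 2 ((x - 1) / 2)

open Filter Real

private lemma aux_log_small :
    Filter.Tendsto (fun t : ℝ => Real.log (1 + 1 / t)) atTop (nhds 0) := by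
  have h1 : Filter.Tendsto (fun t : ℝ => 1 + 1 / t) atTop (nhds 1) := by
    have := tendsto_inv_atTop_zero (𝕜 := ℝ)
    simpa [one_div] using tendsto_const_nhds.add this
  have := (Real.continuousAt_log one_ne_zero).tendsto.comp h1
  simpa [Function.comp_def] using this

private lemma aux_t_log :
    Filter.Tendsto (fun t : ℝ => t * Real.log (1 + 1 / t)) atTop (nhds 1) := by
  have h := tendsto_one_add_div_rpow_exp 1
  have h2 := (Real.continuousAt_log (Real.exp_ne_zero 1)).tendsto.comp h
  rw [Real.log_exp] at h2
  apply h2.congr'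
  filter_upwards [eventually_gt_atTop (0 : ℝ)] with t ht
  have hpos : (0 : ℝ) < 1 + 1 / t := by positivity
  simp only [Function.comp_apply]
  rw [Real.log_rpow hpos]

private lemma aux_H :
    Filter.Tendsto (fun t : ℝ => (t + 1) * Real.logb 2 (1 + 1 / t)) atTop
      (nhds (1 / Real.log 2)) := by
  have h := (aux_t_log.add aux_log_small).div_const (Real.log 2)
  have he : (1 + 0) / Real.log 2 = 1 / Real.log 2 := by norm_num
  rw [he] at h
  apply h.congr
  intro t
  simp [Real.logb]
  ring

theorem gaussian_rci_limit (η : ℝ) (hη : η ∈ Set.Ioo (0 : ℝ) 1) :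
    Filter.Tendsto
      (fun μ : ℝ => thermalEntropy (2 * μ + 1) - thermalEntropy (2 * (1 - η) * μ + 1))
      Filter.atTop (nhds (-Real.logb 2 (1 - η))) := by
  obtain ⟨hη0, hη1⟩ := hη
  set ν := 1 - η with hνdef
  have hν : 0 < ν := by simp [hνdef]; linarith
  have hhelper : ∀ t : ℝ, 0 < t →
      thermalEntropy (2 * t + 1) = Real.logb 2 t + (t + 1) * Real.logb 2 (1 + 1 / t) := by
    intro t ht
    have h1 : (2 * t + 1 + 1) / 2 = t + 1 := by ring
    have h2 : (2 * t + 1 - 1) / 2 = t := by ring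
    have h3 : t + 1 = t * (1 + 1 / t) := by field_simp
    have h4 : Real.logb 2 (t + 1) = Real.logb 2 t + Real.logb 2 (1 + 1 / t) := by
      rw [h3, Real.logb_mul (ne_of_gt ht) (by positivity)]
    unfold thermalEntropy
    rw [h1, h2, h4]
    ring
  have hcomp : Filter.Tendsto (fun μ : ℝ => ν * μ) atTop atTop :=
    Filter.tendsto_id.const_mul_atTop hν
  have hHν := aux_H.comp hcomp
  have hmain := (tendsto_const_nhds (x := -Real.logb 2 ν)).add (aux_H.sub hHν)
  rw [sub_self, add_zero] at hmain
  apply hmain.congr'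
  filter_upwards [eventually_gt_atTop (0 : ℝ)] with μ hμ
  have hνμ : 0 < ν * μ := mul_pos hν hμ
  have e1 := hhelper μ hμ
  have e2 := hhelper (ν * μ) hνμ
  have e3 : 2 * (1 - η) * μ + 1 = 2 * (ν * μ) + 1 := by rw [hνdef]; ring
  rw [e3, e1, e2, Real.logb_mul (ne_of_gt hν) (ne_of_gt hμ)]
  simp [Function.comp]
  ring
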